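/- arXiv:2006.04247 — 3 statements merged into one kernel-verified Lean document; each statement's English description precedes it below -/
import Mathlib

section
/- Let L be a Lie algebra and z an element of L such that the adjoint action ad(z) = [z, -] vanishes on a Lie ideal J of L with the quotient L/J finite-dimensional and solvable. Then the ideal generated by z is solvable. -/
/-- If `ad(z)` vanishes on a Lie ideal `J` with `L ⧸ J` finite-dimensional and solvable,
then the Lie ideal generated by `z` is solvable. -/
theorem stmt1 {k L : Type*} [Field k] [LieRing L] [LieAlgebra k L] (z : L)
    (J : LieIdeal k L) (hzJ : ∀ x ∈ J, ⁅z, x⁆ = 0)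
    [FiniteDimensional k (L ⧸ J)] [LieAlgebra.IsSolvable (L ⧸ J)] :
    LieAlgebra.IsSolvable (LieSubmodule.lieSpan k L {z} : LieIdeal k L) := by
  set I : LieIdeal k L := LieSubmodule.lieSpan k L {z} with hI
  -- The centralizer of `J` is a Lie ideal (since `J` is an ideal).
  let C : LieIdeal k L :=
    { carrier := {x : L | ∀ j ∈ J, ⁅x, j⁆ = 0}
      add_mem' := fun {a b} ha hb j hj => by rw [add_lie, ha j hj, hb j hj, add_zero]
      zero_mem' := fun j _ => zero_lie j
      smul_mem' := fun c a ha j hj => by rw [smul_lie, ha j hj, smul_zero]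
      lie_mem := by
        intro y x hx j hj
        have h1 : ⁅x, j⁆ = 0 := hx j hj
        have h2 : ⁅x, ⁅y, j⁆⁆ = 0 := hx _ (J.lie_mem hj)
        rw [lie_lie, h1, h2, lie_zero, sub_zero]
      }
  have hIC : I ≤ C := by
    rw [hI]
    exact LieSubmodule.lieSpan_le.mpr (by rintro x rfl; exact fun j hj => hzJ j hj)
  -- The quotient map as a Lie algebra morphism.
  let π : L →ₗ⁅k⁆ L ⧸ J :=
    { (LieSubmodule.Quotient.mk' J).toLinearMap with
      map_lie' := by intro x y; rfl }
  have hπ : Function.Surjective π := LieSubmodule.Quotient.surjective_mk' J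
  have hker : π.ker = J := by
    ext x
    rw [LieHom.mem_ker]
    show LieSubmodule.Quotient.mk' J x = 0 ↔ x ∈ J
    exact LieSubmodule.Quotient.mk_eq_zero _
  obtain ⟨n, hn⟩ := LieAlgebra.IsSolvable.solvable (R := k) (L := L ⧸ J)
  have hD : LieAlgebra.derivedSeries k L n ≤ J := by
    have hmap := LieIdeal.derivedSeries_map_eq (f := π) n hπ
    rw [hn] at hmap
    have h := LieIdeal.map_eq_bot_iff.mp hmap
    rwa [hker] at h
  have h1 : LieAlgebra.derivedSeriesOfIdeal k L n I ≤ J :=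
    le_trans (LieAlgebra.derivedSeriesOfIdeal_mono le_top n) (by
      rwa [← LieAlgebra.derivedSeries_def])
  have h2 : LieAlgebra.derivedSeriesOfIdeal k L n I ≤ C :=
    le_trans (LieAlgebra.derivedSeriesOfIdeal_le_self I n) hIC
  have hbot : LieAlgebra.derivedSeriesOfIdeal k L (n + 1) I = ⊥ := by
    rw [LieAlgebra.derivedSeriesOfIdeal_succ, LieSubmodule.lie_eq_bot_iff]
    intro x hx m hm
    exact h2 hx m (h1 hm)
  exact LieAlgebra.IsSolvable.mk ((LieIdeal.derivedSeries_eq_bot_iff I (n + 1)).mpr hbot)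
end

section
/- Let R be a commutative noetherian local ring and x₁, …, xₙ elements of the maximal ideal. If the Koszul complex K(x₁,…,xₙ; R) has H₁ = 0, then x₁, …, xₙ is a regular sequence. -/
open Submodule IsLocalRing

section Aux

variable {R : Type*} [CommRing R]

private lemma ideal_smul_top (I : Ideal R) : (I • ⊤ : Submodule R R) = I := by
  rw [smul_eq_mul, Ideal.mul_top]

private def relMap (n : ℕ) (x : Fin n → R) : (Fin n → R) →ₗ[R] R where
  toFun c := ∑ i, c i * x i
  map_add' a b := by simp [add_mul, Finset.sum_add_distrib]
  map_smul' r a := by simp [Finset.mul_sum, mul_assoc]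

private def koszulSpan (n : ℕ) (x : Fin n → R) : Submodule R (Fin n → R) :=
  Submodule.span R {v : Fin n → R | ∃ i j, v = x i • (Pi.single j 1 : Fin n → R) - x j • (Pi.single i 1 : Fin n → R)}

end Aux

section Main

variable {R : Type*} [CommRing R] [IsNoetherianRing R] [IsLocalRing R]

private theorem weak_key : ∀ (n : ℕ) (x : Fin n → R), (∀ i, x i ∈ maximalIdeal R) →
    (∀ c : Fin n → R, ∑ i, c i * x i = 0 → c ∈ koszulSpan n x) →
    RingTheory.Sequence.IsWeaklyRegular R (List.ofFn x) := by
  intro n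
  induction n with
  | zero =>
    intro x _ _
    simpa using RingTheory.Sequence.IsWeaklyRegular.nil R R
  | succ n IH =>
    intro x hx hH1
    set x' : Fin n → R := fun i => x i.castSucc with hx'
    -- Step A: descent of the H1 hypothesis to x'
    have hdesc : ∀ c' : Fin n → R, ∑ i, c' i * x' i = 0 → c' ∈ koszulSpan n x' := by
      have hNN : LinearMap.ker (relMap n x') ≤
          koszulSpan n x' ⊔ (maximalIdeal R) • LinearMap.ker (relMap n x') := by
        intro c' hc'
        have hc'0 : ∑ i, c' i * x' i = 0 := hc'
        set c : Fin (n+1) → R := Fin.snoc c' 0 with hcdef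
        have hcrel : ∑ i, c i * x i = 0 := by
          rw [Fin.sum_univ_castSucc]
          simpa [hcdef, Fin.snoc_castSucc, Fin.snoc_last] using hc'0
        have hmem := hH1 c hcrel
        set U : Submodule R (Fin (n+1) → R) :=
          Submodule.span R {v : Fin (n+1) → R | ∃ i j : Fin n, v =
            x i.castSucc • (Pi.single (j.castSucc) 1 : Fin (n+1) → R)
              - x j.castSucc • (Pi.single (i.castSucc) 1 : Fin (n+1) → R)} with hU
        set V : Submodule R (Fin (n+1) → R) :=
          Submodule.span R (Set.range fun i : Fin (n+1) =>
            x i • (Pi.single (Fin.last n) 1 : Fin (n+1) → R)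
              - x (Fin.last n) • (Pi.single i 1 : Fin (n+1) → R)) with hV
        have hsplit : koszulSpan (n+1) x ≤ U ⊔ V := by
          rw [koszulSpan, Submodule.span_le]
          rintro v ⟨i, j, rfl⟩
          induction j using Fin.lastCases with
          | last =>
            exact Submodule.mem_sup_right (Submodule.subset_span ⟨i, rfl⟩)
          | cast j =>
            induction i using Fin.lastCases with
            | last =>
              rw [show x (Fin.last n) • (Pi.single j.castSucc 1 : Fin (n+1) → R)
                    - x j.castSucc • (Pi.single (Fin.last n) 1 : Fin (n+1) → R)
                  = -(x j.castSucc • (Pi.single (Fin.last n) 1 : Fin (n+1) → R)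
                    - x (Fin.last n) • (Pi.single j.castSucc 1 : Fin (n+1) → R))
                  from (neg_sub _ _).symm]
              exact Submodule.mem_sup_right (neg_mem (Submodule.subset_span ⟨j.castSucc, rfl⟩))
            | cast i =>
              exact Submodule.mem_sup_left (Submodule.subset_span ⟨i, j, rfl⟩)
        obtain ⟨u, hu, w, hw, huw⟩ := Submodule.mem_sup.mp (hsplit hmem)
        rw [hV] at hw
        obtain ⟨a, ha⟩ := (mem_span_range_iff_exists_fun (R:=R)).mp hw
        -- facts about u
        have hulast : u (Fin.last n) = 0 := by
          have hle : U ≤ LinearMap.ker (LinearMap.proj (Fin.last n) :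
              (Fin (n+1) → R) →ₗ[R] R) := by
            rw [hU, Submodule.span_le]
            rintro v ⟨i, j, rfl⟩
            simp only [SetLike.mem_coe, LinearMap.mem_ker, LinearMap.proj_apply,
              Pi.sub_apply, Pi.smul_apply, smul_eq_mul]
            rw [Pi.single_eq_of_ne (Fin.castSucc_lt_last j).ne',
              Pi.single_eq_of_ne (Fin.castSucc_lt_last i).ne']
            ring
          exact hle hu
        have hupi : (fun i : Fin n => u i.castSucc) ∈ koszulSpan n x' := by
          have hle : U ≤ (koszulSpan n x').comap
              (LinearMap.funLeft R R (Fin.castSucc : Fin n → Fin (n+1))) := by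
            rw [hU, Submodule.span_le]
            rintro v ⟨i, j, rfl⟩
            refine Submodule.mem_comap.mpr (Submodule.subset_span ⟨i, j, ?_⟩)
            funext k
            simp [LinearMap.funLeft_apply, Pi.single_apply, Fin.castSucc_inj, hx']
          exact hle hu
        -- coordinates of w
        have hterm : ∀ i : Fin n, (a i.castSucc • (x i.castSucc •
              (Pi.single (Fin.last n) 1 : Fin (n+1) → R)
              - x (Fin.last n) • (Pi.single i.castSucc 1 : Fin (n+1) → R))) (Fin.last n)
            = a i.castSucc * x' i := by
          intro i
          simp only [hx', Pi.smul_apply, Pi.sub_apply, smul_eq_mul]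
          rw [Pi.single_eq_same, Pi.single_eq_of_ne (Fin.castSucc_lt_last i).ne']
          ring
        have hwlast : w (Fin.last n) = ∑ i : Fin n, a i.castSucc * x' i := by
          rw [← ha, Finset.sum_apply, Fin.sum_univ_castSucc]
          have hlast0 : (a (Fin.last n) • (x (Fin.last n) •
              (Pi.single (Fin.last n) 1 : Fin (n+1) → R)
              - x (Fin.last n) • (Pi.single (Fin.last n) 1 : Fin (n+1) → R))) (Fin.last n)
              = 0 := by simp
          rw [hlast0, add_zero]
          exact Finset.sum_congr rfl fun i _ => hterm i
        have ha' : (fun i : Fin n => a i.castSucc) ∈ LinearMap.ker (relMap n x') := by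
          have h0 : u (Fin.last n) + w (Fin.last n) = 0 := by
            rw [show u (Fin.last n) + w (Fin.last n) = (u + w) (Fin.last n) from rfl,
              huw, hcdef, Fin.snoc_last]
          rw [hulast, zero_add, hwlast] at h0
          exact LinearMap.mem_ker.mpr h0
        have hwpi : (fun k : Fin n => w k.castSucc)
            = -(x (Fin.last n)) • (fun i : Fin n => a i.castSucc) := by
          funext k
          have hterm2 : ∀ i : Fin (n+1), (a i • (x i •
                (Pi.single (Fin.last n) 1 : Fin (n+1) → R)
                - x (Fin.last n) • (Pi.single i 1 : Fin (n+1) → R))) k.castSucc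
              = if k.castSucc = i then -(x (Fin.last n) * a i) else 0 := by
            intro i
            simp only [Pi.smul_apply, Pi.sub_apply, smul_eq_mul]
            rw [Pi.single_eq_of_ne (Fin.castSucc_lt_last k).ne, Pi.single_apply]
            split_ifs <;> ring
          show w k.castSucc = _
          rw [← ha, Finset.sum_apply, Finset.sum_congr rfl fun i _ => hterm2 i,
            Finset.sum_ite_eq]
          simp
        have hcc : c' = (fun i : Fin n => u i.castSucc)
            + (-(x (Fin.last n)) • fun i : Fin n => a i.castSucc) := by
          funext k
          have h1 : c k.castSucc = u k.castSucc + w k.castSucc := by rw [← huw]; rfl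
          have h2 := congrFun hwpi k
          simp only [Pi.add_apply]
          rw [← h2, ← h1, hcdef, Fin.snoc_castSucc]
        rw [hcc]
        exact Submodule.add_mem_sup hupi
          (Submodule.smul_mem_smul (neg_mem (hx (Fin.last n))) ha')
      have hfg : (LinearMap.ker (relMap n x')).FG := IsNoetherian.noetherian _
      have hle := Submodule.le_of_le_smul_of_le_jacobson_bot hfg
        (IsLocalRing.maximalIdeal_le_jacobson ⊥) hNN
      intro c' hc'
      exact hle (LinearMap.mem_ker.mpr hc')
    have hW' := IH x' (fun i => hx _) hdesc
    -- Step B: x_last is regular mod (x')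
    have hregq : ∀ z : R, x (Fin.last n) * z ∈ Ideal.span (Set.range x') →
        z ∈ Ideal.span (Set.range x') := by
      intro z hz
      obtain ⟨c', hc'⟩ := (mem_span_range_iff_exists_fun (R:=R)).mp hz
      set c : Fin (n+1) → R := Fin.snoc c' (-z) with hcdef
      have hcrel : ∑ i, c i * x i = 0 := by
        rw [Fin.sum_univ_castSucc]
        simp only [hcdef, Fin.snoc_castSucc, Fin.snoc_last]
        have h4 : ∑ i : Fin n, c' i * x i.castSucc = x (Fin.last n) * z := by
          simpa [hx', smul_eq_mul] using hc'
        rw [h4]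
        ring
      have hmem := hH1 c hcrel
      have hle : koszulSpan (n+1) x ≤ Submodule.comap
          (LinearMap.proj (Fin.last n) : (Fin (n+1) → R) →ₗ[R] R)
          (Ideal.span (Set.range x') : Ideal R) := by
        rw [koszulSpan, Submodule.span_le]
        rintro v ⟨i, j, rfl⟩
        simp only [SetLike.mem_coe, Submodule.mem_comap, LinearMap.proj_apply,
          Pi.sub_apply, Pi.smul_apply, smul_eq_mul]
        induction j using Fin.lastCases with
        | last =>
          induction i using Fin.lastCases with
          | last => simp
          | cast i =>
            rw [Pi.single_eq_same, Pi.single_eq_of_ne (Fin.castSucc_lt_last i).ne']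
            have : x' i ∈ Ideal.span (Set.range x') := Ideal.subset_span (Set.mem_range_self i)
            simpa [hx'] using this
        | cast j =>
          rw [Pi.single_eq_of_ne (Fin.castSucc_lt_last j).ne']
          induction i using Fin.lastCases with
          | last =>
            rw [Pi.single_eq_same]
            have : x' j ∈ Ideal.span (Set.range x') := Ideal.subset_span (Set.mem_range_self j)
            have := neg_mem this
            simpa [hx'] using this
          | cast i =>
            rw [Pi.single_eq_of_ne (Fin.castSucc_lt_last i).ne']
            simp
      have := hle hmem
      rw [Submodule.mem_comap] at this
      have h2 : -z ∈ Ideal.span (Set.range x') := by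
        simpa [hcdef, Fin.snoc_last] using this
      simpa using neg_mem h2
    have hreg : IsSMulRegular (R ⧸ (Ideal.ofList (List.ofFn x') • ⊤ : Submodule R R))
        (x (Fin.last n)) := by
      have hJ : (Ideal.ofList (List.ofFn x') • ⊤ : Submodule R R)
          = (Ideal.span (Set.range x') : Ideal R) := by
        have hset : {r : R | r ∈ List.ofFn x'} = Set.range x' :=
          Set.ext fun r => by simp [List.mem_ofFn]
        rw [ideal_smul_top, Ideal.ofList, hset]
      intro a b hab
      obtain ⟨a, rfl⟩ := Submodule.Quotient.mk_surjective _ a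
      obtain ⟨b, rfl⟩ := Submodule.Quotient.mk_surjective _ b
      replace hab : Submodule.Quotient.mk (x (Fin.last n) • a)
          = Submodule.Quotient.mk (x (Fin.last n) • b) := hab
      rw [Submodule.Quotient.eq] at hab
      rw [Submodule.Quotient.eq]
      rw [hJ] at hab ⊢
      have h3 : x (Fin.last n) • a - x (Fin.last n) • b = x (Fin.last n) * (a - b) := by
        simp [smul_eq_mul, mul_sub]
      rw [h3] at hab
      exact hregq _ hab
    rw [List.ofFn_succ', List.concat_eq_append,
      RingTheory.Sequence.isWeaklyRegular_append_iff]
    exact ⟨hW', (RingTheory.Sequence.isWeaklyRegular_singleton_iff _ _).mpr hreg⟩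

end Main

/-- Depth sensitivity of the Koszul complex: over a commutative noetherian local ring,
if `x₁, …, xₙ` lie in the maximal ideal and the first Koszul homology vanishes (every
relation `∑ cᵢ xᵢ = 0` lies in the span of the trivial Koszul relations
`xᵢ eⱼ − xⱼ eᵢ`), then `x₁, …, xₙ` is a regular sequence. -/
theorem stmt16 {R : Type*} [CommRing R] [IsNoetherianRing R] [IsLocalRing R]
    {n : ℕ} (x : Fin n → R) (hx : ∀ i, x i ∈ IsLocalRing.maximalIdeal R)
    (hH1 : ∀ c : Fin n → R, ∑ i, c i * x i = 0 →
      c ∈ Submodule.span R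
        {v : Fin n → R | ∃ i j, v = x i • (Pi.single j 1 : Fin n → R) - x j • (Pi.single i 1 : Fin n → R)}) :
    RingTheory.Sequence.IsRegular R (List.ofFn x) := by
  refine ⟨weak_key n x hx hH1, ?_⟩
  intro htop
  have h1 : (1 : R) ∈ (Ideal.ofList (List.ofFn x) • ⊤ : Submodule R R) := by
    rw [← htop]; trivial
  rw [ideal_smul_top] at h1
  have h2 : Ideal.ofList (List.ofFn x) ≤ maximalIdeal R := by
    rw [Ideal.ofList, Ideal.span_le]
    intro r hr
    obtain ⟨i, rfl⟩ := List.mem_ofFn.mp hr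
    exact hx i
  exact (mem_maximalIdeal 1).mp (h2 h1) isUnit_one
end

section
/- Let L = ⊕_{i≥1} L^i be a graded Lie algebra over a field with L^i finite-dimensional for each i, and suppose z ∈ L satisfies [z, L^{>n}] = 0 for some n. Then the ideal generated by z is solvable if L^{≤n} is finite-dimensional, since the derived series of the ideal (z) eventually lands in [z-ideal ∩ L^{>n}, -] terms and terminates. -/
/-- Let `L = ⊕_{i ≥ 1} Lⁱ` be a graded Lie algebra over a field with finite-dimensional
graded pieces, and let `z ∈ L` satisfy `[z, Lⁱ] = 0` for all `i > n`. Then the Lie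
ideal generated by `z` is solvable. -/
theorem stmt17 {k L : Type*} [Field k] [LieRing L] [LieAlgebra k L]
    (ℒ : ℕ → Submodule k L) [DirectSum.Decomposition ℒ]
    (hzero : ℒ 0 = ⊥)
    (hbracket : ∀ i j : ℕ, ∀ x ∈ ℒ i, ∀ y ∈ ℒ j, ⁅x, y⁆ ∈ ℒ (i + j))
    (hfin : ∀ i, FiniteDimensional k (ℒ i))
    (n : ℕ) (z : L) (hz : ∀ i : ℕ, n < i → ∀ x ∈ ℒ i, ⁅z, x⁆ = 0) :
    LieAlgebra.IsSolvable (LieSubmodule.lieSpan k L {z} : LieIdeal k L) := by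
  classical
  -- the submodule of elements of degree ≥ m
  set T : ℕ → Submodule k L := fun m => ⨆ i, ℒ (i + m) with hT
  have hle : ∀ {m i : ℕ}, m ≤ i → ℒ i ≤ T m := by
    intro m i h
    have h1 : ℒ i = ℒ ((i - m) + m) := by rw [Nat.sub_add_cancel h]
    rw [h1, hT]
    exact le_iSup (fun j => ℒ (j + m)) (i - m)
  have hTanti : ∀ {a b : ℕ}, b ≤ a → T a ≤ T b := by
    intro a b h
    apply iSup_le; intro i
    exact hle (le_trans h (Nat.le_add_left a i))
  have hT1 : ∀ x : L, x ∈ T 1 := by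
    have htop : (⨆ i, ℒ i) = ⊤ :=
      (DirectSum.Decomposition.isInternal ℒ).submodule_iSup_eq_top
    have : (⨆ i, ℒ i) ≤ T 1 := by
      apply iSup_le; intro i
      rcases Nat.eq_zero_or_pos i with h | h
      · rw [h, hzero]; exact bot_le
      · exact hle h
    intro x
    exact this (htop ▸ Submodule.mem_top)
  -- brackets add degrees
  have hTb : ∀ (a b : ℕ) (x : L), x ∈ T a → ∀ y ∈ T b, ⁅x, y⁆ ∈ T (a + b) := by
    intro a b x hx
    refine Submodule.iSup_induction (motive := fun x => ∀ y ∈ T b, ⁅x, y⁆ ∈ T (a + b))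
      (fun i => ℒ (i + a)) hx ?_ ?_ ?_
    · intro i x hxi y hy
      refine Submodule.iSup_induction (motive := fun y => ⁅x, y⁆ ∈ T (a + b))
        (fun j => ℒ (j + b)) hy ?_ ?_ ?_
      · intro j y hyj
        exact hle (by omega) (hbracket (i + a) (j + b) x hxi y hyj)
      · show ⁅x, (0 : L)⁆ ∈ T (a + b); rw [lie_zero]; exact Submodule.zero_mem _
      · intro y1 y2 h1 h2; rw [lie_add]; exact Submodule.add_mem _ h1 h2
    · intro y _; rw [zero_lie]; exact Submodule.zero_mem _
    · intro x1 x2 h1 h2 y hy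
      rw [add_lie]; exact Submodule.add_mem _ (h1 y hy) (h2 y hy)
  have hTlie : ∀ (m : ℕ) (x y : L), y ∈ T m → ⁅x, y⁆ ∈ T m := by
    intro m x y hy
    have := hTb 1 m x (hT1 x) y hy
    exact hTanti (by omega) this
  -- the centralizer of T (n+1) is a Lie ideal containing z
  set C : LieIdeal k L :=
    { carrier := {x | ∀ y ∈ T (n + 1), ⁅x, y⁆ = 0}
      zero_mem' := by intro y hy; rw [zero_lie]
      add_mem' := by intro a b ha hb y hy; rw [add_lie, ha y hy, hb y hy, add_zero]
      smul_mem' := by intro c a ha y hy; rw [smul_lie, ha y hy, smul_zero]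
      lie_mem := by
        intro x c hc y hy
        have h1 : ⁅x, y⁆ ∈ T (n + 1) := hTlie _ x y hy
        rw [lie_lie, hc y hy, hc _ h1, lie_zero, sub_zero] } with hC
  have hzC : z ∈ C := by
    intro y hy
    refine Submodule.iSup_induction (motive := fun y => ⁅z, y⁆ = 0)
      (fun i => ℒ (i + (n + 1))) hy ?_ ?_ ?_
    · intro i y hyi
      exact hz (i + (n + 1)) (by omega) y hyi
    · show ⁅z, (0 : L)⁆ = 0; exact lie_zero z
    · intro y1 y2 h1 h2; rw [lie_add, h1, h2, add_zero]
  set I : LieIdeal k L := LieSubmodule.lieSpan k L {z} with hI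
  have hIC : I ≤ C := LieSubmodule.lieSpan_le.mpr (Set.singleton_subset_iff.mpr hzC)
  -- derived series of ⊤ lies in degrees ≥ 2^m
  have hD : ∀ (m : ℕ) (x : L), x ∈ LieAlgebra.derivedSeriesOfIdeal k L m ⊤ →
      x ∈ T (2 ^ m) := by
    intro m
    induction m with
    | zero => intro x _; exact hT1 x
    | succ m ih =>
      have h2 : (2 : ℕ) ^ (m + 1) = 2 ^ m + 2 ^ m := by ring
      have : LieAlgebra.derivedSeriesOfIdeal k L (m + 1) ⊤ ≤
          ({ toSubmodule := T (2 ^ (m + 1)),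
             lie_mem := fun {x y} hy => hTlie _ x y hy } : LieIdeal k L) := by
        rw [LieAlgebra.derivedSeriesOfIdeal_succ, LieSubmodule.lieIdeal_oper_eq_span,
          LieSubmodule.lieSpan_le]
        rintro w ⟨⟨x, hx⟩, ⟨y, hy⟩, rfl⟩
        show ⁅x, y⁆ ∈ T (2 ^ (m + 1))
        rw [h2]
        exact hTb _ _ x (ih x hx) y (ih y hy)
      intro x hx
      exact this hx
  -- conclude
  have hbot : LieAlgebra.derivedSeriesOfIdeal k L (n + 1) I = ⊥ := by
    rw [eq_bot_iff, LieAlgebra.derivedSeriesOfIdeal_succ, LieSubmodule.lieIdeal_oper_eq_span,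
      LieSubmodule.lieSpan_le]
    rintro w ⟨⟨x, hx⟩, ⟨y, hy⟩, rfl⟩
    have hxC : x ∈ C := hIC (LieAlgebra.derivedSeriesOfIdeal_le_self I n hx)
    have hyT : y ∈ T (n + 1) := by
      have h1 : y ∈ LieAlgebra.derivedSeriesOfIdeal k L n ⊤ :=
        LieAlgebra.derivedSeriesOfIdeal_mono le_top n hy
      exact hTanti (Nat.lt_two_pow_self (n := n)) (hD n y h1)
    have : ⁅x, y⁆ = 0 := hxC y hyT
    simp [this]
  exact LieAlgebra.IsSolvable.mk (R := k) ((LieIdeal.derivedSeries_eq_bot_iff (I := I) (n + 1)).mpr hbot)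
end
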